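/- Let u be a Lyndon word of length at least 2 and write u = vw where w is the longest proper right factor of u that is itself a Lyndon word. Then v is also a Lyndon word and v < vw < w in lexicographic order. -/
import Mathlib


/-- A nonempty word `u` over a totally ordered alphabet is a Lyndon word if for every
factorization `u = u₁ ++ u₂` into nonempty words one has `u < u₂` lexicographically. -/
def IsLyndon {α : Type*} [LinearOrder α] (u : List α) : Prop :=
  u ≠ [] ∧ ∀ u₁ u₂ : List α, u₁ ≠ [] → u₂ ≠ [] → u = u₁ ++ u₂ → u < u₂

section ShirshovAux

variable {α : Type*} [LinearOrder α]

/-- A list is lexicographically smaller than itself followed by a nonempty list. -/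
lemma lt_append_right_aux (l : List α) {t : List α} (ht : t ≠ []) : l < l ++ t := by
  induction l with
  | nil =>
    cases t with
    | nil => exact absurd rfl ht
    | cons a t => exact List.Lex.nil
  | cons a l ih => exact List.Lex.cons ih

/-- Left cancellation for the lexicographic order. -/
lemma lt_of_append_lt_append_left_aux :
    ∀ (a b c : List α), a ++ b < a ++ c → b < c
  | [], _, _, h => h
  | x :: a, b, c, h => by
    cases h with
    | cons h => exact lt_of_append_lt_append_left_aux a b c h
    | rel h => exact absurd h (lt_irrefl x)

/-- If `a ++ c < b ++ d` then `a < b`, or `a` and `b` are prefix-comparable. -/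
lemma lt_append_cases_aux :
    ∀ (a b c d : List α), a ++ c < b ++ d → a < b ∨ a <+: b ∨ b <+: a
  | [], b, _, _, _ => Or.inr (Or.inl (List.nil_prefix))
  | _ :: _, [], _, _, _ => Or.inr (Or.inr (List.nil_prefix))
  | x :: a, y :: b, c, d, h => by
    cases h with
    | cons h =>
      rcases lt_append_cases_aux a b c d h with h' | h' | h'
      · exact Or.inl (List.Lex.cons h')
      · exact Or.inr (Or.inl (List.cons_prefix_cons.2 ⟨rfl, h'⟩))
      · exact Or.inr (Or.inr (List.cons_prefix_cons.2 ⟨rfl, h'⟩))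
    | rel h => exact Or.inl (List.Lex.rel h)

end ShirshovAux

/-- Shirshov decomposition: if `u` is a Lyndon word of length at least `2` and `u = v ++ w`
where `w` is the longest proper right factor of `u` which is a Lyndon word, then `v` is also
a Lyndon word and `v < v ++ w < w`. -/
theorem shirshov_decomposition {α : Type*} [LinearOrder α] (u v w : List α)
    (hu : IsLyndon u) (hlen : 2 ≤ u.length)
    (huvw : u = v ++ w) (hv : v ≠ []) (hw : w ≠ []) (hwL : IsLyndon w)
    (hmax : ∀ w' : List α, w' <:+ u → w' ≠ u → IsLyndon w' → w'.length ≤ w.length) :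
    IsLyndon v ∧ v < v ++ w ∧ v ++ w < w := by
  obtain ⟨hune, huly⟩ := hu
  have h3 : v ++ w < w := by rw [← huvw]; exact huly v w hv hw huvw
  have h2 : v < v ++ w := lt_append_right_aux v hw
  -- the key claim: no proper suffix `s` of `v` gives `s ++ w < w`
  have claimC : ∀ n (s : List α), s.length ≤ n → s <:+ v → s ≠ [] →
      s.length < v.length → ¬ (s ++ w < w) := by
    intro n
    induction n with
    | zero =>
      intro s hsn _ hne _ _
      exact hne (List.length_eq_zero_iff.1 (Nat.le_zero.1 hsn))
    | succ n ih =>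
      intro s hsn hsv hne hslen hlt
      -- `s ++ w` is a suffix of `u`
      obtain ⟨p, hp⟩ := id hsv
      have hxu : s ++ w <:+ u := ⟨p, by rw [huvw, ← hp, List.append_assoc]⟩
      -- `s ++ w` is a Lyndon word
      have hxL : IsLyndon (s ++ w) := by
        refine ⟨by simp [hne], ?_⟩
        intro x₁ x₂ hx₁ hx₂ hxeq
        have hx₂suf : x₂ <:+ s ++ w := ⟨x₁, hxeq.symm⟩
        rcases le_or_gt x₂.length w.length with hle | hgt
        · -- `x₂` is a suffix of `w`
          have hx₂w : x₂ <:+ w :=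
            List.suffix_of_suffix_length_le hx₂suf (List.suffix_append s w) hle
          by_cases hxw : x₂ = w
          · rw [hxw]; exact hlt
          · obtain ⟨q, hq⟩ := hx₂w
            have hq0 : q ≠ [] := by
              rintro rfl
              exact hxw hq
            exact hlt.trans (hwL.2 q x₂ hq0 hx₂ hq.symm)
        · -- `x₂ = s' ++ w` for some nonempty proper suffix `s'` of `s`
          have hwx₂ : w <:+ x₂ :=
            List.suffix_of_suffix_length_le (List.suffix_append s w) hx₂suf hgt.le
          obtain ⟨s', hs'⟩ := hwx₂
          have hs'ne : s' ≠ [] := by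
            rintro rfl
            rw [List.nil_append] at hs'
            rw [← hs'] at hgt
            exact lt_irrefl _ hgt
          have hss : x₁ ++ s' = s :=
            List.append_cancel_right (bs := w)
              (show (x₁ ++ s') ++ w = s ++ w by rw [List.append_assoc, hs']; exact hxeq.symm)
          have hs'suf : s' <:+ s := ⟨x₁, hss⟩
          have hs'lt : s'.length < s.length := by
            rw [← hss]
            simp only [List.length_append]
            have : 0 < x₁.length := List.length_pos_iff.2 hx₁
            omega
          have hs'v : s' <:+ v := hs'suf.trans hsv
          have hnotlt : ¬ (s' ++ w < w) := by
            refine ih s' (by omega) hs'v hs'ne (by omega) 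
          rw [← hs']
          exact lt_of_lt_of_le hlt (le_of_not_gt hnotlt)
      -- `s ++ w` is a proper suffix of `u`, so its length is at most `w.length`
      have hxne : s ++ w ≠ u := by
        intro h
        have := congrArg List.length h
        rw [huvw] at this
        simp only [List.length_append] at this
        omega
      have := hmax (s ++ w) hxu hxne hxL
      simp only [List.length_append] at this
      have : s.length = 0 := by omega
      exact hne (List.length_eq_zero_iff.1 this)
  refine ⟨⟨hv, ?_⟩, h2, h3⟩
  intro v₁ v₂ hv₁ hv₂ heq
  have hu2 : u = v₁ ++ (v₂ ++ w) := by rw [huvw, heq, List.append_assoc]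
  have hlt : v ++ w < v₂ ++ w := by
    rw [← huvw]; exact huly v₁ (v₂ ++ w) hv₁ (by simp [hw]) hu2
  have hlenv : v₂.length < v.length := by
    have := congrArg List.length heq
    simp only [List.length_append] at this
    have : 0 < v₁.length := List.length_pos_iff.2 hv₁
    omega
  rcases lt_append_cases_aux v v₂ w w hlt with h | h | h
  · exact h
  · exact absurd (List.IsPrefix.length_le h) (by omega)
  · obtain ⟨s, hs⟩ := h
    have hsne : s ≠ [] := by
      rintro rfl
      rw [List.append_nil] at hs
      rw [hs] at hlenv
      exact lt_irrefl _ hlenv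
    have hslen : s.length < v.length := by
      have := congrArg List.length hs
      simp only [List.length_append] at this
      have h2len : 0 < v₂.length := by
        rcases List.length_pos_iff.2 hv₂ with h'
        exact h'
      omega
    have hsw : s ++ w < w := by
      apply lt_of_append_lt_append_left_aux v₂
      rw [← List.append_assoc, hs]
      exact hlt
    exact absurd hsw (claimC s.length s le_rfl ⟨v₂, hs⟩ hsne hslen)
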